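/- Let M be a compact metric space and suppose f̃ = (f̃_0, f̃_1, …, f̃_k) : M → ℝ^{k+1} is continuous and uniquely maximized, i.e. for every t ∈ ℝ^{k+1}_{0+} the function x ↦ ⟨t, f̃(x)⟩ has a unique maximizer on M. If g : ℝ → ℝ is continuous, monotonically increasing, and strictly concave, then the function f(x) = (g(f̃_0(x)), f̃_1(x), …, f̃_k(x)) is also uniquely maximized. -/

import Mathlib

open scoped BigOperators

open Filter Topology

section Aux

variable {g : ℝ → ℝ}

/-- right chord slopes decrease -/
lemma chordR (hcc : ConcaveOn ℝ Set.univ g) {a s r : ℝ} (h1 : a < s) (h2 : s < r) :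
    (g r - g a) * (s - a) ≤ (g s - g a) * (r - a) := by
  have h := hcc.slope_anti_adjacent (x := a) (y := s) (z := r) trivial trivial h1 h2
  rw [div_le_div_iff₀ (by linarith) (by linarith)] at h
  nlinarith

/-- left chord slopes decrease -/
lemma chordL (hcc : ConcaveOn ℝ Set.univ g) {p s a : ℝ} (h1 : p < s) (h2 : s < a) :
    (g a - g s) * (a - p) ≤ (g a - g p) * (a - s) := by
  have h := hcc.slope_anti_adjacent (x := p) (y := s) (z := a) trivial trivial h1 h2
  rw [div_le_div_iff₀ (by linarith) (by linarith)] at h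
  nlinarith

/-- concave function lies above its chords -/
lemma concave_chord (hcc : ConcaveOn ℝ Set.univ g) {a b s : ℝ} (hab : a < b)
    (h1 : a ≤ s) (h2 : s ≤ b) :
    (g b - g a) * (s - a) ≤ (g s - g a) * (b - a) := by
  have hd : (0:ℝ) < b - a := by linarith
  have hlam : (0:ℝ) ≤ (b - s) / (b - a) := div_nonneg (by linarith) (by linarith)
  have hmu : (0:ℝ) ≤ (s - a) / (b - a) := div_nonneg (by linarith) (by linarith)
  have hsum : (b - s) / (b - a) + (s - a) / (b - a) = 1 := by
    field_simp
    ring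
  have h := hcc.2 (Set.mem_univ a) (Set.mem_univ b) hlam hmu hsum
  simp only [smul_eq_mul] at h
  have hpt : (b - s) / (b - a) * a + (s - a) / (b - a) * b = s := by
    field_simp; ring
  rw [hpt] at h
  have h' : (b - s) * g a + (s - a) * g b ≤ g s * (b - a) := by
    have := mul_le_mul_of_nonneg_right h hd.le
    calc (b - s) * g a + (s - a) * g b
        = ((b - s) / (b - a) * g a + (s - a) / (b - a) * g b) * (b - a) := by
          field_simp
      _ ≤ g s * (b - a) := this
  nlinarith

/-- Key abstract lemma: if every positive-slope linear functional `c*u + v` has a unique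
maximizer, then so does `g ∘ u + v` for `g` continuous strictly monotone concave. -/
theorem auxmax {M : Type*} [MetricSpace M] [CompactSpace M] [Nonempty M]
    {u v : M → ℝ} (hu : Continuous u) (hv : Continuous v)
    (hg : Continuous g) (hmono : StrictMono g) (hcc : ConcaveOn ℝ Set.univ g)
    (hH : ∀ c : ℝ, 0 < c → ∃! x : M, ∀ w : M, c * u w + v w ≤ c * u x + v x) :
    ∃! x : M, ∀ w : M, g (u w) + v w ≤ g (u x) + v x := by
  -- Step 1 : every maximizer of F = g∘u + v maximizes some linear functional c*u+v, c>0
  have step1 : ∀ x : M, (∀ w, g (u w) + v w ≤ g (u x) + v x) →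
      ∃ c, 0 < c ∧ ∀ w, c * u w + v w ≤ c * u x + v x := by
    intro x hx
    by_contra hcon
    push_neg at hcon
    -- hcon : ∀ c, 0 < c → ∃ w, c * u x + v x < c * u w + v w
    obtain ⟨xR, -, hxR⟩ := isCompact_univ.exists_isMaxOn ⟨x, trivial⟩ hu.continuousOn
    obtain ⟨xm, -, hxm⟩ := isCompact_univ.exists_isMinOn ⟨x, trivial⟩ hu.continuousOn
    set a := u x with ha
    set R := u xR with hR
    set m := u xm with hm
    have hwR : ∀ w : M, u w ≤ R := fun w => hxR (Set.mem_univ w)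
    have hwm : ∀ w : M, m ≤ u w := fun w => hxm (Set.mem_univ w)
    have haR : a ≤ R := hwR x
    have hma : m ≤ a := hwm x
    have hzex : ∀ c : ℝ, 0 < c → ∃ zc : M, ∀ w, c * u w + v w ≤ c * u zc + v zc :=
      fun c hc => (hH c hc).exists
    choose! z hz using hzex
    have hρ : ∀ c, 0 < c → g (u (z c)) - g a < c * (u (z c) - a) := by
      intro c hc
      obtain ⟨w₀, hw₀⟩ := hcon c hc
      have h1 := hz c hc w₀
      have h2 := hx (z c)
      linarith
    set σR := (g (R + 1) - g a) / (R + 1 - a) with hσRdef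
    have hσR : 0 < σR := div_pos (sub_pos.mpr (hmono (by linarith))) (by linarith)
    set σL := (g a - g (m - 1)) / (a - (m - 1)) with hσLdef
    have hσL : 0 < σL := div_pos (sub_pos.mpr (hmono (by linarith))) (by linarith)
    have hlow : u (z (σR / 2)) < a := by
      have hc : 0 < σR / 2 := by linarith
      have hρ' := hρ _ hc
      by_contra hge
      push_neg at hge
      rcases eq_or_lt_of_le hge with he | hlt
      · rw [← he] at hρ'; simp at hρ'
      · have hch := chordR hcc hlt (show u (z (σR / 2)) < R + 1 by
          have := hwR (z (σR / 2)); linarith)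
        have hkey : σR * (u (z (σR / 2)) - a) ≤ g (u (z (σR / 2))) - g a := by
          rw [hσRdef, div_mul_eq_mul_div, div_le_iff₀ (by linarith)]
          nlinarith
        nlinarith
    have hhigh : ∀ c, 0 < c → σL < c → a < u (z c) := by
      intro c hc hcL
      by_contra hle
      push_neg at hle
      have hρ' := hρ c hc
      rcases eq_or_lt_of_le hle with he | hlt
      · rw [he] at hρ'; simp at hρ'
      · have hch := chordL hcc (show m - 1 < u (z c) by have := hwm (z c); linarith) hlt
        have hkey : g a - g (u (z c)) ≤ σL * (a - u (z c)) := by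
          rw [hσLdef, div_mul_eq_mul_div, le_div_iff₀ (by linarith)]
          nlinarith
        nlinarith
    set C := {c : ℝ | 0 < c ∧ u (z c) < a} with hCdef
    have hC1 : σR / 2 ∈ C := ⟨by linarith, hlow⟩
    have hCb : BddAbove C := by
      refine ⟨σL, fun c hcC => ?_⟩
      by_contra hgt
      push_neg at hgt
      exact absurd (hhigh c hcC.1 hgt) (not_lt.mpr hcC.2.le)
    set chat := sSup C with hchatdef
    have hchatpos : 0 < chat := lt_of_lt_of_le (by linarith) (le_csSup hCb hC1)
    -- approximating sequences
    have hγex : ∀ n : ℕ, ∃ c ∈ C, chat - 1 / (n + 1) < c := by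
      intro n
      apply exists_lt_of_lt_csSup ⟨_, hC1⟩
      have : (0:ℝ) < 1 / (n + 1) := by positivity
      linarith
    choose γ hγC hγlt using hγex
    have hγle : ∀ n, γ n ≤ chat := fun n => le_csSup hCb (hγC n)
    have hone : Tendsto (fun n : ℕ => 1 / ((n : ℝ) + 1)) atTop (𝓝 0) :=
      tendsto_one_div_add_atTop_nhds_zero_nat
    have hγtend : Tendsto γ atTop (𝓝 chat) := by
      have hlow' : Tendsto (fun n : ℕ => chat - 1 / ((n : ℝ) + 1)) atTop (𝓝 (chat - 0)) :=
        tendsto_const_nhds.sub hone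
      rw [sub_zero] at hlow'
      exact tendsto_of_tendsto_of_tendsto_of_le_of_le hlow' tendsto_const_nhds
        (fun n => (hγlt n).le) hγle
    set δ : ℕ → ℝ := fun n => chat + 1 / ((n : ℝ) + 1) with hδdef
    have hδpos : ∀ n, 0 < δ n := by
      intro n
      have : (0:ℝ) < 1 / ((n : ℝ) + 1) := by positivity
      simp only [hδdef]; linarith
    have hδnotC : ∀ n, a ≤ u (z (δ n)) := by
      intro n
      by_contra hlt
      push_neg at hlt
      have : δ n ∈ C := ⟨hδpos n, hlt⟩
      have h1 := le_csSup hCb this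
      have : (0:ℝ) < 1 / ((n : ℝ) + 1) := by positivity
      simp only [hδdef] at h1
      linarith
    have hδtend : Tendsto δ atTop (𝓝 chat) := by
      have h' : Tendsto (fun n : ℕ => chat + 1 / ((n : ℝ) + 1)) atTop (𝓝 (chat + 0)) :=
        tendsto_const_nhds.add hone
      simpa [hδdef] using h'
    -- subsequence limits
    obtain ⟨w₁, -, φ, hφ, hφtend⟩ :=
      isCompact_univ.tendsto_subseq (x := fun n => z (γ n)) (fun n => Set.mem_univ _)
    obtain ⟨w₂, -, ψ, hψ, hψtend⟩ :=
      isCompact_univ.tendsto_subseq (x := fun n => z (δ n)) (fun n => Set.mem_univ _)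
    have hmax1 : ∀ w, chat * u w + v w ≤ chat * u w₁ + v w₁ := by
      intro w
      have hn : ∀ n, γ (φ n) * u w + v w
          ≤ γ (φ n) * u (z (γ (φ n))) + v (z (γ (φ n))) :=
        fun n => hz _ (hγC (φ n)).1 w
      have hγφ : Tendsto (fun n => γ (φ n)) atTop (𝓝 chat) :=
        hγtend.comp hφ.tendsto_atTop
      have hzφ : Tendsto (fun n => z (γ (φ n))) atTop (𝓝 w₁) := hφtend
      have hL : Tendsto (fun n => γ (φ n) * u w + v w) atTop (𝓝 (chat * u w + v w)) :=
        (hγφ.mul tendsto_const_nhds).add tendsto_const_nhds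
      have hR : Tendsto (fun n => γ (φ n) * u (z (γ (φ n))) + v (z (γ (φ n)))) atTop
          (𝓝 (chat * u w₁ + v w₁)) :=
        (hγφ.mul ((hu.tendsto w₁).comp hzφ)).add ((hv.tendsto w₁).comp hzφ)
      exact le_of_tendsto_of_tendsto' hL hR hn
    have hmax2 : ∀ w, chat * u w + v w ≤ chat * u w₂ + v w₂ := by
      intro w
      have hn : ∀ n, δ (ψ n) * u w + v w
          ≤ δ (ψ n) * u (z (δ (ψ n))) + v (z (δ (ψ n))) :=
        fun n => hz _ (hδpos (ψ n)) w
      have hδψ : Tendsto (fun n => δ (ψ n)) atTop (𝓝 chat) :=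
        hδtend.comp hψ.tendsto_atTop
      have hzψ : Tendsto (fun n => z (δ (ψ n))) atTop (𝓝 w₂) := hψtend
      have hL : Tendsto (fun n => δ (ψ n) * u w + v w) atTop (𝓝 (chat * u w + v w)) :=
        (hδψ.mul tendsto_const_nhds).add tendsto_const_nhds
      have hR : Tendsto (fun n => δ (ψ n) * u (z (δ (ψ n))) + v (z (δ (ψ n)))) atTop
          (𝓝 (chat * u w₂ + v w₂)) :=
        (hδψ.mul ((hu.tendsto w₂).comp hzψ)).add ((hv.tendsto w₂).comp hzψ)
      exact le_of_tendsto_of_tendsto' hL hR hn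
    have ha1 : u w₁ ≤ a := by
      refine le_of_tendsto ((hu.tendsto w₁).comp hφtend) ?_
      exact Filter.Eventually.of_forall fun n => (hγC (φ n)).2.le
    have ha2 : a ≤ u w₂ := by
      refine ge_of_tendsto ((hu.tendsto w₂).comp hψtend) ?_
      exact Filter.Eventually.of_forall fun n => hδnotC (ψ n)
    obtain ⟨z₀, -, hz₀u⟩ := hH chat hchatpos
    have h12 : w₁ = w₂ := (hz₀u w₁ hmax1).trans (hz₀u w₂ hmax2).symm
    have hua : u w₁ = a := le_antisymm ha1 (h12 ▸ ha2)
    obtain ⟨w₀, hw₀⟩ := hcon chat hchatpos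
    have h1 := hmax1 w₀
    have h2 := hx w₁
    rw [hua] at h1 h2
    linarith
  -- uniqueness of two maximizers, ordered case
  have main : ∀ (p q : M) (cp cq : ℝ), 0 < cp → 0 < cq →
      (∀ w, g (u w) + v w ≤ g (u p) + v p) →
      (∀ w, g (u w) + v w ≤ g (u q) + v q) →
      (∀ w, cp * u w + v w ≤ cp * u p + v p) →
      (∀ w, cq * u w + v w ≤ cq * u q + v q) →
      (cp * u q + v q < cp * u p + v p) →
      (cq * u p + v p < cq * u q + v q) →
      u p < u q → False := by
    intro p q cp cq hcp hcq hpF hqF hpH hqH h1 h2 hab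
    have hFeq : g (u p) + v p = g (u q) + v q := le_antisymm (hqF p) (hpF q)
    set A := u p with hA
    set B := u q with hB
    set σ := (g B - g A) / (B - A) with hσdef
    have hσpos : 0 < σ := div_pos (sub_pos.mpr (hmono hab)) (by linarith)
    have hσm : σ * (B - A) = g B - g A := by
      rw [hσdef]; exact div_mul_cancel₀ _ (sub_ne_zero.mpr hab.ne')
    obtain ⟨zs, hzs, hzsu⟩ := hH σ hσpos
    have hcpσ : cp < σ := by
      have h3 : cp * (B - A) < g B - g A := by linarith
      nlinarith
    have hcqσ : σ < cq := by
      have h3 : g B - g A < cq * (B - A) := by linarith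
      nlinarith
    have hAz : A ≤ u zs := by
      have e1 := hpH zs
      have e2 := hzs p
      nlinarith
    have hzB : u zs ≤ B := by
      have e1 := hqH zs
      have e2 := hzs q
      nlinarith
    have heq : σ * A + v p = σ * B + v q := by nlinarith
    have hpq : p ≠ q := fun h => absurd (congrArg u h) (ne_of_lt hab)
    have hstr : σ * A + v p < σ * u zs + v zs := by
      rcases lt_or_eq_of_le (hzs p) with h | h
      · exact h
      · exfalso
        apply hpq
        have hpmax : ∀ w, σ * u w + v w ≤ σ * u p + v p := fun w => by
          have := hzs w; linarith
        have hqmax : ∀ w, σ * u w + v w ≤ σ * u q + v q := fun w => by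
          have := hpmax w; linarith
        rw [hzsu p hpmax, hzsu q hqmax]
    have hF := hpF zs
    have hlt : g (u zs) - g A < σ * (u zs - A) := by nlinarith
    -- chord inequality contradicts hlt
    have hch := concave_chord hcc hab hAz hzB
    have : σ * (u zs - A) ≤ g (u zs) - g A := by
      rw [hσdef, div_mul_eq_mul_div, div_le_iff₀ (by linarith)]
      nlinarith
    linarith
  -- existence of a maximizer
  obtain ⟨x, -, hx'⟩ := isCompact_univ.exists_isMaxOn
    ⟨Classical.arbitrary M, trivial⟩ ((hg.comp hu).add hv).continuousOn
  have hx : ∀ w, g (u w) + v w ≤ g (u x) + v x := fun w => hx' (Set.mem_univ w)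
  refine ⟨x, hx, ?_⟩
  intro y hy
  by_contra hne
  obtain ⟨cx, hcxpos, hcx⟩ := step1 x hx
  obtain ⟨cy, hcypos, hcy⟩ := step1 y hy
  have hstrict : ∀ (p q : M) (c : ℝ), 0 < c →
      (∀ w, c * u w + v w ≤ c * u p + v p) → q ≠ p →
      c * u q + v q < c * u p + v p := by
    intro p q c hc hp hqp
    rcases lt_or_eq_of_le (hp q) with h | h
    · exact h
    · exfalso
      apply hqp
      obtain ⟨z₀, -, hz₀u⟩ := hH c hc
      have hq : ∀ w, c * u w + v w ≤ c * u q + v q := fun w => by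
        have := hp w; linarith
      rw [hz₀u q hq, hz₀u p hp]
  have h1 : cx * u y + v y < cx * u x + v x := hstrict x y cx hcxpos hcx hne
  have h2 : cy * u x + v x < cy * u y + v y :=
    hstrict y x cy hcypos hcy (fun h => hne h.symm)
  rcases lt_trichotomy (u x) (u y) with h | h | h
  · exact main x y cx cy hcxpos hcypos hx hy hcx hcy h1 h2 h
  · rw [h] at h1 h2; linarith
  · exact main y x cy cx hcypos hcxpos hy hx hcy hcx h2 h1 h

lemma sum_update_eq {k : ℕ} (t f : Fin (k + 1) → ℝ) (r : ℝ) :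
    ∑ i, t i * Function.update f 0 r i = t 0 * r + ∑ i : Fin k, t i.succ * f i.succ := by
  rw [Fin.sum_univ_succ]
  simp [Function.update_of_ne (Fin.succ_ne_zero _)]

lemma sum_update_coef {k : ℕ} (t : Fin (k + 1) → ℝ) (c : ℝ) (f : Fin (k + 1) → ℝ) :
    ∑ i, Function.update t 0 c i * f i = c * f 0 + ∑ i : Fin k, t i.succ * f i.succ := by
  rw [Fin.sum_univ_succ]
  simp [Function.update_of_ne (Fin.succ_ne_zero _)]

end Aux

theorem stmt_8 {k : ℕ} {M : Type*} [MetricSpace M] [CompactSpace M]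
    (ft : M → Fin (k + 1) → ℝ) (hft : Continuous ft)
    (huniq : ∀ t : Fin (k + 1) → ℝ, 0 ≤ t 0 → t ≠ 0 →
      ∃! x : M, ∀ y : M, ∑ i, t i * ft y i ≤ ∑ i, t i * ft x i)
    (g : ℝ → ℝ) (hg : Continuous g) (hmono : StrictMono g)
    (hconc : StrictConcaveOn ℝ Set.univ g) :
    ∀ t : Fin (k + 1) → ℝ, 0 ≤ t 0 → t ≠ 0 →
      ∃! x : M, ∀ y : M,
        ∑ i, t i * Function.update (ft y) 0 (g (ft y 0)) i ≤
        ∑ i, t i * Function.update (ft x) 0 (g (ft x 0)) i := by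
  intro t ht0 htne
  have hcc : ConcaveOn ℝ Set.univ g := hconc.concaveOn
  set u : M → ℝ := fun w => ft w 0 with hudef
  set v : M → ℝ := fun w => ∑ i : Fin k, t i.succ * ft w i.succ with hvdef
  have hFeq : ∀ y : M, ∑ i, t i * Function.update (ft y) 0 (g (ft y 0)) i
      = t 0 * g (u y) + v y := fun y => sum_update_eq t (ft y) _
  obtain ⟨x₀, -, -⟩ := huniq t ht0 htne
  haveI : Nonempty M := ⟨x₀⟩
  have hcoord : ∀ i, Continuous fun w => ft w i := fun i => (continuous_apply i).comp hft
  have hucont : Continuous u := hcoord 0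
  have hvcont : Continuous v := by
    apply continuous_finset_sum
    exact fun i _ => continuous_const.mul (hcoord i.succ)
  rcases eq_or_lt_of_le ht0 with h0 | h0
  · -- t 0 = 0 : reduces directly to the hypothesis
    obtain ⟨x, hx, hxu⟩ := huniq t ht0 htne
    have key : ∀ y : M, ∑ i, t i * ft y i
        = ∑ i, t i * Function.update (ft y) 0 (g (ft y 0)) i := by
      intro y
      rw [hFeq y, Fin.sum_univ_succ, ← h0]
      simp [hvdef]
    refine ⟨x, fun y => ?_, fun y hy => hxu y fun z => ?_⟩
    · rw [← key y, ← key x]; exact hx y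
    · rw [key z, key y]; exact hy z
  · -- t 0 > 0 : apply the abstract lemma with g' = t0 • g
    have hH : ∀ c : ℝ, 0 < c → ∃! x : M, ∀ w : M, c * u w + v w ≤ c * u x + v x := by
      intro c hc
      have hs0 : 0 ≤ Function.update t 0 c 0 := by simp [hc.le]
      have hsne : Function.update t 0 c ≠ 0 := by
        intro hcon
        have : Function.update t 0 c 0 = 0 := by rw [hcon]; rfl
        simp at this
        exact absurd this (ne_of_gt hc)
      obtain ⟨x, hx, hxu⟩ := huniq _ hs0 hsne
      refine ⟨x, fun w => ?_, fun y hy => hxu y fun w => ?_⟩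
      · have := hx w
        rw [sum_update_coef, sum_update_coef] at this
        exact this
      · rw [sum_update_coef, sum_update_coef]
        exact hy w
    have hg' : Continuous fun s => t 0 * g s := continuous_const.mul hg
    have hmono' : StrictMono fun s => t 0 * g s := fun p q h => by
      have := hmono h
      exact mul_lt_mul_of_pos_left this h0
    have hcc' : ConcaveOn ℝ Set.univ fun s => t 0 * g s := by
      have := hcc.smul ht0
      simpa [Pi.smul_def, smul_eq_mul] using this
    obtain ⟨x, hx, hxu⟩ := auxmax (g := fun s => t 0 * g s) hucont hvcont hg' hmono' hcc' hH
    refine ⟨x, fun y => ?_, fun y hy => hxu y fun w => ?_⟩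
    · rw [hFeq y, hFeq x]; exact hx y
    · have := hy w
      rw [hFeq w, hFeq y] at this
      exact this
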